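/- arXiv:1504.05002 — 8 statements merged into one kernel-verified Lean document; each statement's English description precedes it below -/
import Mathlib

section
/- Let g : ℝᵐ → ℝ be σ-strongly convex and continuously differentiable, X ⊆ ℝⁿ convex, E ∈ ℝ^{m×n}, b ∈ ℝⁿ, f(x) = g(Ex) + ⟨b, x⟩, and let x* minimize f over X with t* = E x*. Then for every x ∈ X, (σ/2)·‖Ex − t*‖² ≤ f(x) − f(x*). -/
open scoped InnerProductSpace

theorem stmt_3 {n m : ℕ} (σ : ℝ) (hσ : 0 < σ)
    (g : EuclideanSpace ℝ (Fin m) → ℝ) (hgdiff : ContDiff ℝ 1 g)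
    (hgsc : ∀ y z : EuclideanSpace ℝ (Fin m),
      g z + ⟪gradient g z, y - z⟫_ℝ + σ / 2 * ‖y - z‖ ^ 2 ≤ g y)
    (X : Set (EuclideanSpace ℝ (Fin n))) (hXconv : Convex ℝ X)
    (E : EuclideanSpace ℝ (Fin n) →L[ℝ] EuclideanSpace ℝ (Fin m))
    (b : EuclideanSpace ℝ (Fin n))
    (f : EuclideanSpace ℝ (Fin n) → ℝ)
    (hf : ∀ x, f x = g (E x) + ⟪b, x⟫_ℝ)
    (xstar : EuclideanSpace ℝ (Fin n)) (hxstar : xstar ∈ X)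
    (hmin : ∀ x ∈ X, f xstar ≤ f x) :
    ∀ x ∈ X, σ / 2 * ‖E x - E xstar‖ ^ 2 ≤ f x - f xstar := by
  intro x hx
  set N : ℝ := ‖E x - E xstar‖ ^ 2 with hN
  have key : ∀ t : ℝ, t ∈ Set.Ioo (0:ℝ) 1 → σ / 2 * (1 - t) * N ≤ f x - f xstar := by
    intro t ht
    obtain ⟨ht0, ht1⟩ := ht
    set xt : EuclideanSpace ℝ (Fin n) := xstar + t • (x - xstar) with hxt
    have hxtX : xt ∈ X := by
      have := hXconv hxstar hx (a := 1 - t) (b := t) (by linarith) (le_of_lt ht0)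
        (by ring)
      convert this using 1
      rw [hxt]
      module
    set u : EuclideanSpace ℝ (Fin m) := E xstar with hu
    set v : EuclideanSpace ℝ (Fin m) := E x with hv
    set w : EuclideanSpace ℝ (Fin m) := u + t • (v - u) with hw
    have hEw : E xt = w := by
      rw [hxt, hw, map_add, map_smul, map_sub]
    set p : ℝ := ⟪gradient g w, v - u⟫_ℝ with hp
    have h1 : g w + (1 - t) * p + σ / 2 * ((1 - t) ^ 2 * N) ≤ g v := by
      have := hgsc v w
      have hvw : v - w = (1 - t) • (v - u) := by rw [hw]; module
      rw [hvw, real_inner_smul_right, norm_smul] at this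
      rw [Real.norm_eq_abs, abs_of_nonneg (by linarith : (0:ℝ) ≤ 1 - t)] at this
      calc g w + (1 - t) * p + σ / 2 * ((1 - t) ^ 2 * N) =
          g w + (1 - t) * p + σ / 2 * ((1 - t) * ‖v - u‖) ^ 2 := by ring
        _ ≤ g v := this
    have h2 : g w + (-t) * p + σ / 2 * (t ^ 2 * N) ≤ g u := by
      have := hgsc u w
      have huw : u - w = (-t) • (v - u) := by rw [hw]; module
      rw [huw, real_inner_smul_right, norm_smul] at this
      rw [Real.norm_eq_abs, abs_of_nonpos (by linarith : (-t:ℝ) ≤ 0)] at this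
      calc g w + (-t) * p + σ / 2 * (t ^ 2 * N) =
          g w + -t * p + σ / 2 * (- -t * ‖v - u‖) ^ 2 := by ring
        _ ≤ g u := this
    have h3 : g w + σ / 2 * (t * (1 - t) * N) ≤ t * g v + (1 - t) * g u := by
      nlinarith [mul_le_mul_of_nonneg_left h1 (le_of_lt ht0),
        mul_le_mul_of_nonneg_left h2 (by linarith : (0:ℝ) ≤ 1 - t)]
    have h4 : g u + ⟪b, xstar⟫_ℝ ≤ g w + ⟪b, xt⟫_ℝ := by
      have := hmin xt hxtX
      rw [hf, hf, hEw] at this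
      exact this
    have hbxt : ⟪b, xt⟫_ℝ = ⟪b, xstar⟫_ℝ + t * ⟪b, x - xstar⟫_ℝ := by
      rw [hxt, inner_add_right, real_inner_smul_right]
    rw [hbxt] at h4
    have h5 : g u - t * ⟪b, x - xstar⟫_ℝ ≤ g w := by linarith
    have h6 : t * (σ / 2 * ((1 - t) * N)) ≤ t * (g v - g u + ⟪b, x - xstar⟫_ℝ) := by
      nlinarith
    have h7 := le_of_mul_le_mul_left (by linarith [h6] : t * (σ / 2 * ((1 - t) * N)) ≤ t * (g v - g u + ⟪b, x - xstar⟫_ℝ)) ht0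
    have hfx : f x - f xstar = g v - g u + ⟪b, x - xstar⟫_ℝ := by
      rw [hf, hf, inner_sub_right]; ring
    rw [hfx]
    linarith [h7]
  have tend : Filter.Tendsto (fun t : ℝ => σ / 2 * (1 - t) * N) (nhdsWithin 0 (Set.Ioi 0))
      (nhds (σ / 2 * N)) := by
    have hc : Continuous (fun t : ℝ => σ / 2 * (1 - t) * N) := ((continuous_const.mul (continuous_const.sub continuous_id)).mul continuous_const)
    have : Filter.Tendsto (fun t : ℝ => σ / 2 * (1 - t) * N) (nhds 0)
        (nhds (σ / 2 * (1 - 0) * N)) := hc.tendsto 0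
    simpa using this.mono_left nhdsWithin_le_nhds
  refine le_of_tendsto tend ?_
  filter_upwards [Ioo_mem_nhdsGT_of_mem (Set.mem_Ico.mpr ⟨le_refl (0:ℝ), one_pos⟩)] with t ht
  exact key t ht
end

section
/- Under the assumptions of the previous statement with X compact, let f* = f(x*), s* = ⟨b, x*⟩, G = max_{x∈X}‖∇g(Ex)‖, D = diam(X), D_E = diam(EX). Then for every x ∈ X, (⟨b,x⟩ − s*)² ≤ (f(x) − f*)·(‖b‖D + 3GD_E + 2G²/σ). -/
open scoped InnerProductSpace

theorem stmt_4 {n m : ℕ} (σ : ℝ) (hσ : 0 < σ)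
    (g : EuclideanSpace ℝ (Fin m) → ℝ) (hgdiff : ContDiff ℝ 1 g)
    (hgsc : ∀ y z : EuclideanSpace ℝ (Fin m),
      g z + ⟪gradient g z, y - z⟫_ℝ + σ / 2 * ‖y - z‖ ^ 2 ≤ g y)
    (X : Set (EuclideanSpace ℝ (Fin n)))
    (hXne : X.Nonempty) (hXc : IsCompact X) (hXconv : Convex ℝ X)
    (E : EuclideanSpace ℝ (Fin n) →L[ℝ] EuclideanSpace ℝ (Fin m))
    (b : EuclideanSpace ℝ (Fin n))
    (f : EuclideanSpace ℝ (Fin n) → ℝ)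
    (hf : ∀ x, f x = g (E x) + ⟪b, x⟫_ℝ)
    (xstar : EuclideanSpace ℝ (Fin n)) (hxstar : xstar ∈ X)
    (hmin : ∀ x ∈ X, f xstar ≤ f x)
    (G : ℝ) (hG : IsGreatest ((fun x => ‖gradient g (E x)‖) '' X) G) :
    ∀ x ∈ X, (⟪b, x⟫_ℝ - ⟪b, xstar⟫_ℝ) ^ 2 ≤
      (f x - f xstar) *
        (‖b‖ * Metric.diam X + 3 * G * Metric.diam (E '' X) + 2 * G ^ 2 / σ) := by
  intro x hx
  have hgd : Differentiable ℝ g := hgdiff.differentiable one_ne_zero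
  -- notation
  set D := Metric.diam X with hD
  set DE := Metric.diam (E '' X) with hDE
  set Δ : ℝ := f x - f xstar with hΔdef
  set s : ℝ := ⟪b, x⟫_ℝ - ⟪b, xstar⟫_ℝ with hsdef
  set r : ℝ := ‖E x - E xstar‖ with hrdef
  have hr0 : 0 ≤ r := norm_nonneg _
  have hΔ0 : 0 ≤ Δ := sub_nonneg.2 (hmin x hx)
  -- G bounds
  have hGx : ‖gradient g (E x)‖ ≤ G := hG.2 ⟨x, hx, rfl⟩
  have hGxs : ‖gradient g (E xstar)‖ ≤ G := hG.2 ⟨xstar, hxstar, rfl⟩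
  have hG0 : 0 ≤ G := le_trans (norm_nonneg _) hGx
  -- fderiv of f at xstar
  have hgrad : ∀ z : EuclideanSpace ℝ (Fin m),
      HasFDerivAt g ((InnerProductSpace.toDual ℝ _) (gradient g z)) z :=
    fun z => ((hgd z).hasGradientAt).hasFDerivAt
  have hfEq : f = fun y => g (E y) + ⟪b, y⟫_ℝ := funext hf
  have hfderiv : HasFDerivAt f
      ((((InnerProductSpace.toDual ℝ _) (gradient g (E xstar))).comp
        (E : EuclideanSpace ℝ (Fin n) →L[ℝ] EuclideanSpace ℝ (Fin m))) +
        (innerSL ℝ b)) xstar := by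
    rw [hfEq]
    exact ((hgrad (E xstar)).comp xstar (E.hasFDerivAt)).add ((innerSL ℝ b).hasFDerivAt)
  -- first order optimality
  have hcone : x - xstar ∈ posTangentConeAt X xstar :=
    sub_mem_posTangentConeAt_of_segment_subset (hXconv.segment_subset hxstar hx)
  have hlocmin : IsLocalMinOn f X xstar :=
    eventually_nhdsWithin_of_forall hmin
  have hfoc0 := hlocmin.hasFDerivWithinAt_nonneg hfderiv.hasFDerivWithinAt hcone
  have hfoc : 0 ≤ ⟪gradient g (E xstar), E x - E xstar⟫_ℝ + ⟪b, x - xstar⟫_ℝ := by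
    simp only [ContinuousLinearMap.add_apply, ContinuousLinearMap.comp_apply,
      ContinuousLinearMap.coe_coe, InnerProductSpace.toDual_apply_apply, innerSL_apply_apply,
      map_sub] at hfoc0
    rw [inner_sub_right, inner_sub_right]
    linarith
  have hbsub : ⟪b, x - xstar⟫_ℝ = s := by rw [hsdef, inner_sub_right]
  -- strong convexity at xstar: σ/2 r^2 ≤ Δ and a ≥ ⟪∇g(Ex*), u⟫ + σ/2 r²
  set a : ℝ := g (E x) - g (E xstar) with hadef
  have hΔas : Δ = a + s := by rw [hΔdef, hadef, hsdef, hf x, hf xstar]; ring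
  have hsc1 := hgsc (E x) (E xstar)
  have hsc2 := hgsc (E xstar) (E x)
  have hrsym : ‖E xstar - E x‖ = r := by rw [hrdef, norm_sub_rev]
  rw [← hrdef] at hsc1
  rw [hrsym] at hsc2
  have hσr : 0 ≤ σ / 2 * r ^ 2 := by positivity
  -- inner product bounds
  have hib1 : ⟪gradient g (E x), E xstar - E x⟫_ℝ ≥ -(G * r) := by
    have h1 : |⟪gradient g (E x), E xstar - E x⟫_ℝ| ≤ ‖gradient g (E x)‖ * ‖E xstar - E x‖ :=
      abs_real_inner_le_norm _ _
    rw [hrsym] at h1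
    have h2 := (abs_le.1 h1).1
    have h3 := mul_le_mul_of_nonneg_right hGx hr0
    linarith
  have hib2 : ⟪gradient g (E xstar), E x - E xstar⟫_ℝ ≥ -(G * r) := by
    have h1 : |⟪gradient g (E xstar), E x - E xstar⟫_ℝ|
        ≤ ‖gradient g (E xstar)‖ * ‖E x - E xstar‖ := abs_real_inner_le_norm _ _
    rw [← hrdef] at h1
    have h2 := (abs_le.1 h1).1
    have h3 := mul_le_mul_of_nonneg_right hGxs hr0
    linarith
  -- |a| ≤ G r
  have haub : a ≤ G * r := by linarith [hsc2, hib1, hσr]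
  have halb : -(G * r) ≤ a := by linarith [hsc1, hib2, hσr]
  -- σ/2 r² ≤ Δ
  have hkey : σ / 2 * r ^ 2 ≤ Δ := by
    rw [hbsub] at hfoc
    linarith [hsc1, hfoc, hΔas]
  -- diameter bounds
  have hrDE : r ≤ DE := by
    have hb : Bornology.IsBounded (E '' X) := (hXc.image E.continuous).isBounded
    have := Metric.dist_le_diam_of_mem hb ⟨x, hx, rfl⟩ ⟨xstar, hxstar, rfl⟩
    simpa [hrdef, dist_eq_norm] using this
  have hDE0 : 0 ≤ DE := Metric.diam_nonneg
  have hsD : |s| ≤ ‖b‖ * D := by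
    have h1 : |⟪b, x - xstar⟫_ℝ| ≤ ‖b‖ * ‖x - xstar‖ := abs_real_inner_le_norm _ _
    have h2 : ‖x - xstar‖ ≤ D := by
      have := Metric.dist_le_diam_of_mem hXc.isBounded hx hxstar
      simpa [dist_eq_norm] using this
    rw [hbsub] at h1
    calc |s| ≤ ‖b‖ * ‖x - xstar‖ := h1
      _ ≤ ‖b‖ * D := by exact mul_le_mul_of_nonneg_left h2 (norm_nonneg b)
  -- Δ ≤ G*DE + ‖b‖*D
  have hΔub : Δ ≤ G * DE + ‖b‖ * D := by
    have h1 : a ≤ G * DE := le_trans haub (mul_le_mul_of_nonneg_left hrDE hG0)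
    have h2 := abs_le.1 hsD
    linarith [hΔas, h2.2]
  -- |s| ≤ Δ + G r
  have hsb : |s| ≤ Δ + G * r := by
    rw [abs_le]
    constructor <;> linarith [hΔas, haub, halb, hΔ0]
  -- G² r² ≤ 2 Δ G² / σ
  have hq : G ^ 2 * r ^ 2 ≤ 2 * Δ * G ^ 2 / σ := by
    rw [le_div_iff₀ hσ]
    nlinarith [hkey, sq_nonneg G, sq_nonneg r]
  -- finish
  have hs2 : s ^ 2 ≤ (Δ + G * r) ^ 2 :=
    sq_le_sq' (abs_le.1 hsb).1 (abs_le.1 hsb).2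
  have expand : Δ * (‖b‖ * D + 3 * G * DE + 2 * G ^ 2 / σ)
      = Δ * (‖b‖ * D) + 3 * (Δ * (G * DE)) + 2 * Δ * G ^ 2 / σ := by ring
  rw [expand]
  have e1 : Δ * Δ ≤ Δ * (G * DE + ‖b‖ * D) := mul_le_mul_of_nonneg_left hΔub hΔ0
  have e2 : 2 * Δ * G * r ≤ 2 * Δ * G * DE :=
    mul_le_mul_of_nonneg_left hrDE (by positivity)
  have hexp : (Δ + G * r) ^ 2 = Δ * Δ + 2 * Δ * G * r + G ^ 2 * r ^ 2 := by ring
  clear_value D DE Δ s r a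
  linarith [hs2, hexp, e1, e2, hq]
end

section
/- Let X = {x ∈ ℝⁿ : Ax ≤ a} be a nonempty compact polyhedron, g σ-strongly convex and C¹, f(x) = g(Ex) + ⟨b,x⟩ with optimal set X* and optimal value f*. Then there exists a constant κ > 0 such that for all x ∈ X, dist(x, X*)² ≤ κ·(f(x) − f*). Moreover one may take κ = θ²·(‖b‖D + 3GD_E + 2(G²+1)/σ), where θ is the Hoffman constant associated with the matrix [Aᵀ, Eᵀ, b]ᵀ, D = diam(X), D_E = diam(EX), G = max_{x∈X}‖∇g(Ex)‖. -/
open scoped InnerProductSpace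

set_option maxHeartbeats 1000000

theorem stmt_5 {n m k : ℕ} (σ : ℝ) (hσ : 0 < σ)
    (A : Fin k → EuclideanSpace ℝ (Fin n)) (a : Fin k → ℝ)
    (X : Set (EuclideanSpace ℝ (Fin n)))
    (hX : X = {x | ∀ i, ⟪A i, x⟫_ℝ ≤ a i})
    (hXne : X.Nonempty) (hXc : IsCompact X)
    (g : EuclideanSpace ℝ (Fin m) → ℝ) (hgdiff : ContDiff ℝ 1 g)
    (hgsc : ∀ y z : EuclideanSpace ℝ (Fin m),
      g z + ⟪gradient g z, y - z⟫_ℝ + σ / 2 * ‖y - z‖ ^ 2 ≤ g y)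
    (E : EuclideanSpace ℝ (Fin n) →L[ℝ] EuclideanSpace ℝ (Fin m))
    (b : EuclideanSpace ℝ (Fin n))
    (f : EuclideanSpace ℝ (Fin n) → ℝ)
    (hf : ∀ x, f x = g (E x) + ⟪b, x⟫_ℝ)
    (Xstar : Set (EuclideanSpace ℝ (Fin n)))
    (hXstar : Xstar = {y ∈ X | ∀ x ∈ X, f y ≤ f x})
    (xstar : EuclideanSpace ℝ (Fin n)) (hxstar : xstar ∈ Xstar)
    (G : ℝ) (hG : IsGreatest ((fun x => ‖gradient g (E x)‖) '' X) G)
    -- θ is the Hoffman constant associated with the matrix [Aᵀ, Eᵀ, b]ᵀ: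
    -- dist(x, X ∩ {x : Ex = t*, ⟨b,x⟩ = s*}) ≤ θ‖residual‖ for all x ∈ X
    (θ : ℝ) (hθpos : 0 < θ)
    (hθ : ∀ x ∈ X, Metric.infDist x Xstar ≤
      θ * Real.sqrt (‖E x - E xstar‖ ^ 2 + (⟪b, x⟫_ℝ - ⟪b, xstar⟫_ℝ) ^ 2)) :
    ∃ κ : ℝ, 0 < κ ∧
      κ = θ ^ 2 * (‖b‖ * Metric.diam X + 3 * G * Metric.diam (E '' X) +
        2 * (G ^ 2 + 1) / σ) ∧
      ∀ x ∈ X, Metric.infDist x Xstar ^ 2 ≤ κ * (f x - f xstar) := by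
  rw [hXstar] at hxstar
  obtain ⟨hxX, hxopt⟩ := hxstar
  -- X is convex
  have hXconv : Convex ℝ X := by
    rw [hX]
    intro x hx y hy s t hs ht hst i
    have h1 : ⟪A i, s • x + t • y⟫_ℝ = s * ⟪A i, x⟫_ℝ + t * ⟪A i, y⟫_ℝ := by
      rw [inner_add_right, real_inner_smul_right, real_inner_smul_right]
    have hx' := hx i
    have hy' := hy i
    rw [h1]
    calc s * ⟪A i, x⟫_ℝ + t * ⟪A i, y⟫_ℝ ≤ s * a i + t * a i :=
          add_le_add (mul_le_mul_of_nonneg_left hx' hs) (mul_le_mul_of_nonneg_left hy' ht)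
      _ = a i := by rw [← add_mul, hst, one_mul]
  have hG0 : 0 ≤ G := by
    obtain ⟨x0, _, hx0⟩ := hG.1
    rw [← hx0]; exact norm_nonneg _
  have hgc : Continuous (gradient g) :=
    (InnerProductSpace.toDual ℝ _).symm.continuous.comp (hgdiff.continuous_fderiv one_ne_zero)
  -- first-order optimality condition at xstar
  have key : ∀ x ∈ X, 0 ≤ ⟪gradient g (E xstar), E x - E xstar⟫_ℝ +
      (⟪b, x⟫_ℝ - ⟪b, xstar⟫_ℝ) := by
    intro x hx
    set d := x - xstar with hd
    have hEd : E d = E x - E xstar := by rw [hd, map_sub]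
    have hstep : ∀ t : ℝ, t ∈ Set.Ioc (0:ℝ) 1 →
        0 ≤ ⟪gradient g (E (xstar + t • d)), E d⟫_ℝ + (⟪b, x⟫_ℝ - ⟪b, xstar⟫_ℝ) := by
      intro t ht
      have hmem : xstar + t • d ∈ X := by
        have h := hXconv hxX hx (by linarith [ht.2] : (0:ℝ) ≤ 1 - t) ht.1.le (by ring)
        have he : xstar + t • d = (1 - t) • xstar + t • x := by rw [hd]; module
        rw [he]; exact h
      have hle := hxopt _ hmem
      rw [hf, hf] at hle
      have hsc := hgsc (E xstar) (E (xstar + t • d))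
      have hE : E (xstar + t • d) = E xstar + t • E d := by
        rw [map_add, map_smul]
      have h1 : ⟪gradient g (E (xstar + t • d)), E xstar - E (xstar + t • d)⟫_ℝ
          = -t * ⟪gradient g (E (xstar + t • d)), E d⟫_ℝ := by
        rw [show E xstar - E (xstar + t • d) = (-t) • E d by rw [hE]; module]
        rw [real_inner_smul_right]
      have h2 : ⟪b, xstar + t • d⟫_ℝ = ⟪b, xstar⟫_ℝ + t * (⟪b, x⟫_ℝ - ⟪b, xstar⟫_ℝ) := by
        rw [inner_add_right, real_inner_smul_right, hd, inner_sub_right]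
      have hnn : 0 ≤ σ / 2 * ‖E xstar - E (xstar + t • d)‖ ^ 2 :=
        mul_nonneg (by linarith) (sq_nonneg _)
      rw [h1] at hsc
      rw [h2] at hle
      by_contra hcon
      push_neg at hcon
      nlinarith [ht.1, mul_pos ht.1 (neg_pos.mpr hcon)]
    have hc : Continuous fun t : ℝ =>
        ⟪gradient g (E (xstar + t • d)), E d⟫_ℝ + (⟪b, x⟫_ℝ - ⟪b, xstar⟫_ℝ) := by
      have h1 : Continuous fun t : ℝ => xstar + t • d := by continuity
      exact ((hgc.comp (E.continuous.comp h1)).inner continuous_const).add continuous_const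
    have hlim : Filter.Tendsto (fun t : ℝ =>
        ⟪gradient g (E (xstar + t • d)), E d⟫_ℝ + (⟪b, x⟫_ℝ - ⟪b, xstar⟫_ℝ))
        (nhdsWithin (0:ℝ) (Set.Ioi 0))
        (nhds (⟪gradient g (E (xstar + (0:ℝ) • d)), E d⟫_ℝ + (⟪b, x⟫_ℝ - ⟪b, xstar⟫_ℝ))) :=
      (hc.tendsto 0).mono_left nhdsWithin_le_nhds
    have hev : ∀ᶠ t in nhdsWithin (0:ℝ) (Set.Ioi 0),
        0 ≤ ⟪gradient g (E (xstar + t • d)), E d⟫_ℝ + (⟪b, x⟫_ℝ - ⟪b, xstar⟫_ℝ) :=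
      Filter.eventually_of_mem (Ioc_mem_nhdsGT zero_lt_one) hstep
    have := ge_of_tendsto hlim hev
    simpa [hEd] using this
  -- main bound
  have hD0 : 0 ≤ Metric.diam X := Metric.diam_nonneg
  have hDE0 : 0 ≤ Metric.diam (E '' X) := Metric.diam_nonneg
  have hCpos : 0 < ‖b‖ * Metric.diam X + 3 * G * Metric.diam (E '' X) +
      2 * (G ^ 2 + 1) / σ := by
    have h1 : 0 ≤ ‖b‖ * Metric.diam X := mul_nonneg (norm_nonneg _) hD0
    have h2 : 0 ≤ 3 * G * Metric.diam (E '' X) := mul_nonneg (by linarith) hDE0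
    have h3 : 0 < 2 * (G ^ 2 + 1) / σ := by positivity
    linarith
  refine ⟨_, mul_pos (by positivity) hCpos, rfl, ?_⟩
  intro x hx
  have hΔ : 0 ≤ f x - f xstar := sub_nonneg.mpr (hxopt x hx)
  set t := f x - f xstar with ht
  set u := E x - E xstar with hu
  set β := ⟪b, x⟫_ℝ - ⟪b, xstar⟫_ℝ with hβ
  clear_value t u β
  have hΔeq : t = (g (E x) - g (E xstar)) + β := by
    rw [ht, hf, hf, hβ]; ring
  have hkey := key x hx
  rw [← hu, ← hβ] at hkey
  have hsc1 := hgsc (E x) (E xstar)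
  rw [← hu] at hsc1
  have hsc2 := hgsc (E xstar) (E x)
  rw [show E xstar - E x = -u by rw [hu]; module, inner_neg_right, norm_neg] at hsc2
  -- norm/diam bounds
  have hunorm : ‖u‖ ≤ Metric.diam (E '' X) := by
    rw [hu, ← dist_eq_norm]
    exact Metric.dist_le_diam_of_mem (hXc.image E.continuous).isBounded
      ⟨x, hx, rfl⟩ ⟨xstar, hxX, rfl⟩
  have hβb : |β| ≤ ‖b‖ * Metric.diam X := by
    rw [hβ, ← inner_sub_right]
    calc |⟪b, x - xstar⟫_ℝ| ≤ ‖b‖ * ‖x - xstar‖ := abs_real_inner_le_norm _ _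
      _ ≤ ‖b‖ * Metric.diam X := by
          apply mul_le_mul_of_nonneg_left _ (norm_nonneg _)
          rw [← dist_eq_norm]
          exact Metric.dist_le_diam_of_mem hXc.isBounded hx hxX
  have hGx : ‖gradient g (E x)‖ ≤ G := hG.2 ⟨x, hx, rfl⟩
  have hGxs : ‖gradient g (E xstar)‖ ≤ G := hG.2 ⟨xstar, hxX, rfl⟩
  have hi1 : |⟪gradient g (E xstar), u⟫_ℝ| ≤ G * ‖u‖ :=
    (abs_real_inner_le_norm _ _).trans (mul_le_mul_of_nonneg_right hGxs (norm_nonneg _))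
  have hi2 : |⟪gradient g (E x), u⟫_ℝ| ≤ G * ‖u‖ :=
    (abs_real_inner_le_norm _ _).trans (mul_le_mul_of_nonneg_right hGx (norm_nonneg _))
  -- ‖u‖² ≤ 2/σ * t
  have husq : ‖u‖ ^ 2 ≤ 2 / σ * t := by
    rw [div_mul_eq_mul_div, le_div_iff₀ hσ]
    nlinarith [hsc1, hkey]
  -- bound on β²
  have habs1 : |β| ≤ t + G * ‖u‖ := by
    have h1 : g (E x) - g (E xstar) ≤ ⟪gradient g (E x), u⟫_ℝ := by nlinarith [hsc2]
    have h2 : ⟪gradient g (E xstar), u⟫_ℝ ≤ g (E x) - g (E xstar) := by nlinarith [hsc1]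
    have h3 : |g (E x) - g (E xstar)| ≤ G * ‖u‖ := by
      rw [abs_le]
      constructor
      · nlinarith [abs_le.mp hi1]
      · nlinarith [abs_le.mp hi2]
    rw [abs_le]
    constructor
    · nlinarith [abs_le.mp h3]
    · nlinarith [abs_le.mp h3]
  have hb2 : β ^ 2 ≤ ‖b‖ * Metric.diam X * t + G * Metric.diam (E '' X) * t
      + G ^ 2 * ‖u‖ ^ 2 := by
    have e1 : |β| * |β| ≤ |β| * (t + G * ‖u‖) :=
      mul_le_mul_of_nonneg_left habs1 (abs_nonneg β)
    have e2 : |β| * t ≤ ‖b‖ * Metric.diam X * t := mul_le_mul_of_nonneg_right hβb hΔ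
    have e3 : |β| * (G * ‖u‖) ≤ (t + G * ‖u‖) * (G * ‖u‖) :=
      mul_le_mul_of_nonneg_right habs1 (mul_nonneg hG0 (norm_nonneg _))
    have e4 : t * (G * ‖u‖) ≤ t * (G * Metric.diam (E '' X)) :=
      mul_le_mul_of_nonneg_left (mul_le_mul_of_nonneg_left hunorm hG0) hΔ
    nlinarith [e1, e2, e3, e4, sq_abs β]
  -- combine
  have hsum : ‖u‖ ^ 2 + β ^ 2 ≤ (‖b‖ * Metric.diam X + 3 * G * Metric.diam (E '' X) +
      2 * (G ^ 2 + 1) / σ) * t := by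
    have h5 : G ^ 2 * ‖u‖ ^ 2 ≤ G ^ 2 * (2 / σ * t) :=
      mul_le_mul_of_nonneg_left husq (sq_nonneg G)
    have h6 : 0 ≤ G * Metric.diam (E '' X) * t :=
      mul_nonneg (mul_nonneg hG0 hDE0) hΔ
    have h7 : ‖u‖ ^ 2 + β ^ 2 ≤ ‖b‖ * Metric.diam X * t + G * Metric.diam (E '' X) * t
        + G ^ 2 * (2 / σ * t) + 2 / σ * t := by linarith [hb2, husq, h5]
    have h8 : ‖b‖ * Metric.diam X * t + G * Metric.diam (E '' X) * t
        + G ^ 2 * (2 / σ * t) + 2 / σ * t + 2 * (G * Metric.diam (E '' X) * t)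
        = (‖b‖ * Metric.diam X + 3 * G * Metric.diam (E '' X) + 2 * (G ^ 2 + 1) / σ) * t := by
      ring
    linarith [h6, h7, h8]
  -- final
  have hd0 : 0 ≤ Metric.infDist x Xstar := Metric.infDist_nonneg
  have hθx := hθ x hx
  rw [← hu, ← hβ] at hθx
  have hsq : Metric.infDist x Xstar ^ 2 ≤ θ ^ 2 * (‖u‖ ^ 2 + β ^ 2) := by
    have h1 : Metric.infDist x Xstar ^ 2 ≤ (θ * Real.sqrt (‖u‖ ^ 2 + β ^ 2)) ^ 2 :=
      pow_le_pow_left₀ hd0 hθx 2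
    rwa [mul_pow, Real.sq_sqrt (by positivity)] at h1
  calc Metric.infDist x Xstar ^ 2 ≤ θ ^ 2 * (‖u‖ ^ 2 + β ^ 2) := hsq
    _ ≤ θ ^ 2 * ((‖b‖ * Metric.diam X + 3 * G * Metric.diam (E '' X) +
        2 * (G ^ 2 + 1) / σ) * t) := mul_le_mul_of_nonneg_left hsum (sq_nonneg θ)
    _ = θ ^ 2 * (‖b‖ * Metric.diam X + 3 * G * Metric.diam (E '' X) +
        2 * (G ^ 2 + 1) / σ) * t := by ring
end

section
/- Let X = {x ∈ ℝⁿ : Ax ≤ a} be a nonempty compact polyhedron with vertex set V, let U ⊆ V be nonempty, and let I(U) = {i : A_i v = a_i for all v ∈ U}. Define ζ = min{a_i − A_i v : v ∈ V, i with a_i > A_i v}, φ = max{‖A_i‖ : i ∉ I(V)}, and Ω_X = ζ/φ. If z ∈ ℝⁿ satisfies A_{I(U)} z ≤ 0 and ⟨c, z⟩ > 0, then max_{p∈V, u∈U} ⟨c, p − u⟩ ≥ (Ω_X / |U|) · ⟨c, z⟩ / ‖z‖. -/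
open scoped InnerProductSpace

theorem stmt_7 {n m : ℕ}
    (A : Fin m → EuclideanSpace ℝ (Fin n)) (a : Fin m → ℝ)
    (X : Set (EuclideanSpace ℝ (Fin n)))
    (hX : X = {x | ∀ i, ⟪A i, x⟫_ℝ ≤ a i})
    (hXne : X.Nonempty) (hXc : IsCompact X)
    (V : Set (EuclideanSpace ℝ (Fin n))) (hV : V = Set.extremePoints ℝ X)
    (U : Finset (EuclideanSpace ℝ (Fin n))) (hUne : U.Nonempty) (hUV : ↑U ⊆ V)
    (ζ φ : ℝ)
    (hζ : IsLeast {r | ∃ v ∈ V, ∃ i, ⟪A i, v⟫_ℝ < a i ∧ r = a i - ⟪A i, v⟫_ℝ} ζ)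
    (hφ : IsGreatest {r | ∃ i, ¬(∀ v ∈ V, ⟪A i, v⟫_ℝ = a i) ∧ r = ‖A i‖} φ)
    (c z : EuclideanSpace ℝ (Fin n))
    (hz : ∀ i, (∀ v ∈ U, ⟪A i, v⟫_ℝ = a i) → ⟪A i, z⟫_ℝ ≤ 0)
    (hcz : 0 < ⟪c, z⟫_ℝ) :
    ∃ p ∈ V, ∃ u ∈ U,
      ζ / φ / (U.card : ℝ) * (⟪c, z⟫_ℝ / ‖z‖) ≤ ⟪c, p - u⟫_ℝ := by
  classical
  set N : ℝ := (U.card : ℝ) with hNdef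
  have hN : 0 < N := by
    rw [hNdef]; exact_mod_cast Finset.card_pos.2 hUne
  -- ζ > 0
  obtain ⟨v₀, hv₀, i₀, hi₀, hζeq⟩ := hζ.1
  have hζpos : 0 < ζ := by rw [hζeq]; linarith
  -- φ ≥ 0
  obtain ⟨j₀, hj₀, hφeq⟩ := hφ.1
  have hφnn : 0 ≤ φ := by rw [hφeq]; positivity
  -- ‖z‖ > 0
  have hzne : z ≠ 0 := by
    intro h
    rw [h, inner_zero_right] at hcz
    exact lt_irrefl 0 hcz
  have hznorm : 0 < ‖z‖ := norm_pos_iff.2 hzne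
  -- every u ∈ U lies in X
  have hUX : ∀ u ∈ U, u ∈ X := fun u hu =>
    extremePoints_subset (hV ▸ hUV hu)
  -- the step size
  set t : ℝ := ζ / φ / N / ‖z‖ with htdef
  have ht0 : 0 ≤ t := by positivity
  have hkey : t * φ * ‖z‖ ≤ ζ / N := by
    rcases eq_or_lt_of_le hφnn with h | h
    · rw [← h]; simp; positivity
    · have : t * φ * ‖z‖ = ζ / N := by
        field_simp [htdef]
        rw [htdef]; field_simp [h.ne', hN.ne', hznorm.ne']
      rw [this]
  -- the perturbed centroid
  set x' : EuclideanSpace ℝ (Fin n) := N⁻¹ • (∑ u ∈ U, u) + t • z with hx'def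
  have hAx' : ∀ i, ⟪A i, x'⟫_ℝ = N⁻¹ * (∑ u ∈ U, ⟪A i, u⟫_ℝ) + t * ⟪A i, z⟫_ℝ := by
    intro i
    rw [hx'def, inner_add_right, real_inner_smul_right, real_inner_smul_right, inner_sum]
  have hx'X : x' ∈ X := by
    rw [hX]
    intro i
    rw [hAx' i]
    by_cases hi : ∀ v ∈ U, ⟪A i, v⟫_ℝ = a i
    · have hsum : (∑ u ∈ U, ⟪A i, u⟫_ℝ) = N * a i := by
        rw [Finset.sum_congr rfl hi, Finset.sum_const, nsmul_eq_mul]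
      have h2 : t * ⟪A i, z⟫_ℝ ≤ 0 := mul_nonpos_of_nonneg_of_nonpos ht0 (hz i hi)
      rw [hsum, inv_mul_cancel_left₀ (ne_of_gt hN)]
      linarith
    · push_neg at hi
      obtain ⟨u₀, hu₀U, hu₀⟩ := hi
      have hu₀X : u₀ ∈ X := hUX u₀ hu₀U
      have hle : ⟪A i, u₀⟫_ℝ ≤ a i := by rw [hX] at hu₀X; exact hu₀X i
      have hlt : ⟪A i, u₀⟫_ℝ < a i := lt_of_le_of_ne hle hu₀
      have hζle : ζ ≤ a i - ⟪A i, u₀⟫_ℝ :=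
        hζ.2 ⟨u₀, hUV hu₀U, i, hlt, rfl⟩
      -- sum bound
      have hsumb : ζ ≤ ∑ u ∈ U, (a i - ⟪A i, u⟫_ℝ) := by
        refine le_trans hζle (Finset.single_le_sum (f := fun u => a i - ⟪A i, u⟫_ℝ) (fun u hu => ?_) hu₀U)
        have : u ∈ X := hUX u hu
        rw [hX] at this
        exact sub_nonneg.2 (this i)
      have hsum2 : (∑ u ∈ U, (a i - ⟪A i, u⟫_ℝ)) = N * a i - ∑ u ∈ U, ⟪A i, u⟫_ℝ := by
        rw [Finset.sum_sub_distrib, Finset.sum_const, nsmul_eq_mul]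
      have hsum3 : (∑ u ∈ U, ⟪A i, u⟫_ℝ) ≤ N * a i - ζ := by
        rw [hsum2] at hsumb; linarith
      -- φ bound
      have hnotall : ¬(∀ v ∈ V, ⟪A i, v⟫_ℝ = a i) := fun h => hu₀ (h u₀ (hUV hu₀U))
      have hAiφ : ‖A i‖ ≤ φ := hφ.2 ⟨i, hnotall, rfl⟩
      have hCS : ⟪A i, z⟫_ℝ ≤ ‖A i‖ * ‖z‖ := real_inner_le_norm _ _
      have h2 : t * ⟪A i, z⟫_ℝ ≤ ζ / N := by
        calc t * ⟪A i, z⟫_ℝ ≤ t * (‖A i‖ * ‖z‖) := by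
              rcases eq_or_lt_of_le ht0 with h | h
              · rw [← h]; simp
              · exact (mul_le_mul_iff_right₀ h).2 hCS
          _ ≤ t * (φ * ‖z‖) := by
              have : ‖A i‖ * ‖z‖ ≤ φ * ‖z‖ := mul_le_mul_of_nonneg_right hAiφ (le_of_lt hznorm)
              exact mul_le_mul_of_nonneg_left this ht0
          _ = t * φ * ‖z‖ := by ring
          _ ≤ ζ / N := hkey
      have h1 : N⁻¹ * (∑ u ∈ U, ⟪A i, u⟫_ℝ) ≤ a i - ζ / N := by
        have := mul_le_mul_of_nonneg_left hsum3 (le_of_lt (inv_pos.2 hN))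
        rw [mul_sub, inv_mul_cancel_left₀ (ne_of_gt hN)] at this
        rw [div_eq_inv_mul]
        linarith
      linarith
  -- the exposed face of maximizers of ⟪c, ·⟫ over X
  have hexp : IsExposed ℝ X {y ∈ X | ∀ w ∈ X, ⟪c, w⟫_ℝ ≤ ⟪c, y⟫_ℝ} :=
    fun _ => ⟨innerSL ℝ c, rfl⟩
  obtain ⟨z₀, hz₀X, hz₀max⟩ :=
    hXc.exists_isMaxOn hXne ((innerSL ℝ c).continuous.continuousOn)
  have hFne : ({y ∈ X | ∀ w ∈ X, ⟪c, w⟫_ℝ ≤ ⟪c, y⟫_ℝ}).Nonempty :=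
    ⟨z₀, hz₀X, fun w hw => hz₀max hw⟩
  obtain ⟨p, hp⟩ := (hexp.isCompact hXc).extremePoints_nonempty hFne
  have hpV : p ∈ V := hV ▸ hexp.isExtreme.extremePoints_subset_extremePoints hp
  have hpmax : ∀ w ∈ X, ⟪c, w⟫_ℝ ≤ ⟪c, p⟫_ℝ := (extremePoints_subset hp).2
  -- pick u minimizing ⟪c, ·⟫ over U
  obtain ⟨u, huU, humin⟩ := U.exists_min_image (fun u => ⟪c, u⟫_ℝ) hUne
  refine ⟨p, hpV, u, huU, ?_⟩
  -- lower bound on ⟪c, x'⟫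
  have hsumc : N * ⟪c, u⟫_ℝ ≤ ∑ w ∈ U, ⟪c, w⟫_ℝ := by
    have := Finset.card_nsmul_le_sum U (fun w => ⟪c, w⟫_ℝ) (⟪c, u⟫_ℝ) humin
    rwa [nsmul_eq_mul] at this
  have hcx' : ⟪c, u⟫_ℝ + t * ⟪c, z⟫_ℝ ≤ ⟪c, x'⟫_ℝ := by
    have hx'c : ⟪c, x'⟫_ℝ = N⁻¹ * (∑ w ∈ U, ⟪c, w⟫_ℝ) + t * ⟪c, z⟫_ℝ := by
      rw [hx'def, inner_add_right, real_inner_smul_right, real_inner_smul_right, inner_sum]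
    have := mul_le_mul_of_nonneg_left hsumc (le_of_lt (inv_pos.2 hN))
    rw [inv_mul_cancel_left₀ (ne_of_gt hN)] at this
    rw [hx'c]
    linarith
  have hfinal : ⟪c, u⟫_ℝ + t * ⟪c, z⟫_ℝ ≤ ⟪c, p⟫_ℝ := le_trans hcx' (hpmax x' hx'X)
  have heq : t * ⟪c, z⟫_ℝ = ζ / φ / N * (⟪c, z⟫_ℝ / ‖z‖) := by
    rw [htdef]; ring
  rw [inner_sub_right]
  rw [heq] at hfinal
  linarith
end

section
/- In the setting of the vertex-facet distance lemma: if z ∈ ℝⁿ satisfies ⟨c, z⟩ > 0 and A_J z ≤ 0 for J = I(U), then there exists an index i ∉ J with A_i z > 0. Equivalently, the linear program max{⟨c,x⟩ : A_J x ≤ 0, A_{J̄} x ≤ (ζ/|U|)·𝟙} has finite optimal value, since it is bounded above by max_{p∈V,u∈U}⟨c, p−u⟩ < ∞. -/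
open scoped InnerProductSpace

theorem stmt_8 {n m : ℕ}
    (A : Fin m → EuclideanSpace ℝ (Fin n)) (a : Fin m → ℝ)
    (X : Set (EuclideanSpace ℝ (Fin n)))
    (hX : X = {x | ∀ i, ⟪A i, x⟫_ℝ ≤ a i})
    (hXne : X.Nonempty) (hXc : IsCompact X)
    (V : Set (EuclideanSpace ℝ (Fin n))) (hV : V = Set.extremePoints ℝ X)
    (U : Finset (EuclideanSpace ℝ (Fin n))) (hUne : U.Nonempty) (hUV : ↑U ⊆ V)
    (ζ : ℝ) (hζpos : 0 < ζ)
    (hζ : IsLeast {r | ∃ v ∈ V, ∃ i, ⟪A i, v⟫_ℝ < a i ∧ r = a i - ⟪A i, v⟫_ℝ} ζ)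
    (c z : EuclideanSpace ℝ (Fin n))
    (hz : ∀ i, (∀ v ∈ U, ⟪A i, v⟫_ℝ = a i) → ⟪A i, z⟫_ℝ ≤ 0)
    (hcz : 0 < ⟪c, z⟫_ℝ) :
    (∃ i, ¬(∀ v ∈ U, ⟪A i, v⟫_ℝ = a i) ∧ 0 < ⟪A i, z⟫_ℝ) ∧
      BddAbove {r | ∃ x : EuclideanSpace ℝ (Fin n),
        (∀ i, (∀ v ∈ U, ⟪A i, v⟫_ℝ = a i) → ⟪A i, x⟫_ℝ ≤ 0) ∧
        (∀ i, ¬(∀ v ∈ U, ⟪A i, v⟫_ℝ = a i) → ⟪A i, x⟫_ℝ ≤ ζ / (U.card : ℝ)) ∧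
        r = ⟪c, x⟫_ℝ} := by
  classical
  have hUX : ∀ u ∈ U, ∀ i, ⟪A i, u⟫_ℝ ≤ a i := by
    intro u hu i
    have : u ∈ X := by
      rw [hV] at hUV
      exact extremePoints_subset (hUV hu)
    rw [hX] at this
    exact this i
  constructor
  · -- part 1
    by_contra h
    push_neg at h
    have hz' : ∀ i, ⟪A i, z⟫_ℝ ≤ 0 := by
      intro i
      by_cases hi : ∀ v ∈ U, ⟪A i, v⟫_ℝ = a i
      · exact hz i hi
      · exact h i (by push_neg at hi; exact hi)
    obtain ⟨u, hu⟩ := hUne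
    obtain ⟨R, hR⟩ := hXc.isBounded.exists_norm_le
    have hznz : z ≠ 0 := by
      intro h0
      rw [h0, inner_zero_right] at hcz
      exact lt_irrefl 0 hcz
    have hzn : (0:ℝ) < ‖z‖ := norm_pos_iff.mpr hznz
    set t : ℝ := (R + ‖u‖ + 1) / ‖z‖ with ht
    have htn : 0 ≤ t := by
      apply div_nonneg _ hzn.le
      have : 0 ≤ R := le_trans (norm_nonneg u) (hR u (by
        rw [hX]; exact fun i => hUX u hu i))
      positivity
    have hmem : u + t • z ∈ X := by
      rw [hX]
      intro i
      have : ⟪A i, u + t • z⟫_ℝ = ⟪A i, u⟫_ℝ + t * ⟪A i, z⟫_ℝ := by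
        rw [inner_add_right, real_inner_smul_right]
      rw [this]
      have h1 : t * ⟪A i, z⟫_ℝ ≤ 0 := mul_nonpos_of_nonneg_of_nonpos htn (hz' i)
      have h2 := hUX u hu i
      linarith
    have hnorm := hR _ hmem
    have htz : ‖t • z‖ = R + ‖u‖ + 1 := by
      rw [norm_smul, Real.norm_eq_abs, abs_of_nonneg htn, ht,
        div_mul_cancel₀ _ (ne_of_gt hzn)]
    have : ‖t • z‖ ≤ ‖u + t • z‖ + ‖u‖ := by
      have := norm_sub_le (u + t • z) u
      simpa using this
    rw [htz] at this
    linarith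
  · -- part 2
    set N : ℝ := (U.card : ℝ) with hNdef
    have hN : (0:ℝ) < N := by
      rw [hNdef]
      exact_mod_cast hUne.card_pos
    set ub : EuclideanSpace ℝ (Fin n) := N⁻¹ • (∑ u ∈ U, u) with hubdef
    have hub : ∀ i, ⟪A i, ub⟫_ℝ = N⁻¹ * ∑ u ∈ U, ⟪A i, u⟫_ℝ := by
      intro i
      rw [hubdef, real_inner_smul_right, inner_sum]
    -- bounds on ub
    have hubJ : ∀ i, (∀ v ∈ U, ⟪A i, v⟫_ℝ = a i) → ⟪A i, ub⟫_ℝ = a i := by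
      intro i hi
      rw [hub i, Finset.sum_congr rfl hi, Finset.sum_const, nsmul_eq_mul,
        ← hNdef, inv_mul_cancel_left₀ (ne_of_gt hN)]
    have hubJc : ∀ i, ¬(∀ v ∈ U, ⟪A i, v⟫_ℝ = a i) →
        ⟪A i, ub⟫_ℝ ≤ a i - ζ / N := by
      intro i hi
      push_neg at hi
      obtain ⟨u0, hu0, hne⟩ := hi
      have hlt : ⟪A i, u0⟫_ℝ < a i := lt_of_le_of_ne (hUX u0 hu0 i) hne
      have hζle : ζ ≤ a i - ⟪A i, u0⟫_ℝ :=
        hζ.2 ⟨u0, hUV hu0, i, hlt, rfl⟩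
      have hsum : ∑ u ∈ U, ⟪A i, u⟫_ℝ ≤ N * a i - ζ := by
        rw [← Finset.add_sum_erase _ _ hu0]
        have hrest : ∑ u ∈ U.erase u0, ⟪A i, u⟫_ℝ ≤ (N - 1) * a i := by
          have h1 : ∑ u ∈ U.erase u0, ⟪A i, u⟫_ℝ ≤
              ∑ u ∈ U.erase u0, a i :=
            Finset.sum_le_sum fun u hu => hUX u (Finset.mem_of_mem_erase hu) i
          have h2 : ((U.erase u0).card : ℝ) = N - 1 := by
            rw [Finset.card_erase_of_mem hu0, hNdef]
            have : 1 ≤ U.card := hUne.card_pos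
            push_cast [Nat.cast_sub this]
            ring
          rw [Finset.sum_const, nsmul_eq_mul, h2] at h1
          exact h1
        have := hζle
        nlinarith [hrest]
      rw [hub i]
      have : N⁻¹ * ∑ u ∈ U, ⟪A i, u⟫_ℝ ≤ N⁻¹ * (N * a i - ζ) :=
        mul_le_mul_of_nonneg_left hsum (by positivity)
      calc N⁻¹ * ∑ u ∈ U, ⟪A i, u⟫_ℝ ≤ N⁻¹ * (N * a i - ζ) := this
        _ = a i - ζ / N := by field_simp
    -- max of inner c over X
    obtain ⟨xm, hxmX, hxm⟩ := hXc.exists_isMaxOn hXne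
      ((innerSL ℝ c).continuous.continuousOn)
    refine ⟨⟪c, xm⟫_ℝ - ⟪c, ub⟫_ℝ, ?_⟩
    rintro r ⟨x, h1, h2, rfl⟩
    have hmem : ub + x ∈ X := by
      rw [hX]
      intro i
      have heq : ⟪A i, ub + x⟫_ℝ = ⟪A i, ub⟫_ℝ + ⟪A i, x⟫_ℝ := inner_add_right _ _ _
      by_cases hi : ∀ v ∈ U, ⟪A i, v⟫_ℝ = a i
      · have := h1 i hi
        rw [heq, hubJ i hi]
        linarith
      · have := h2 i hi
        have h3 := hubJc i hi
        rw [heq]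
        linarith
    have hle := hxm hmem
    simp only [Set.mem_setOf_eq, innerSL_apply_apply] at hle
    have : ⟪c, ub + x⟫_ℝ = ⟪c, ub⟫_ℝ + ⟪c, x⟫_ℝ := inner_add_right _ _ _
    rw [this] at hle
    linarith
end

section
/- Let X = {x : Ax ≤ a} be a compact polyhedron, U a finite subset of X, and ȳ = (1/|U|)·Σ_{v∈U} v its centroid. Let J = I(U) be the set of indices i with A_i v = a_i for all v ∈ U, and ζ = min{a_j − A_j u : u ∈ ext(X), j with a_j > A_j u} (assumed positive and well-defined). If U ⊆ ext(X), then a_J − A_J ȳ = 0 and a_i − A_i ȳ ≥ ζ/|U| for every i ∉ J. -/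
open scoped InnerProductSpace

theorem stmt_9 {n m : ℕ}
    (A : Fin m → EuclideanSpace ℝ (Fin n)) (a : Fin m → ℝ)
    (X : Set (EuclideanSpace ℝ (Fin n)))
    (hX : X = {x | ∀ i, ⟪A i, x⟫_ℝ ≤ a i})
    (hXne : X.Nonempty) (hXc : IsCompact X)
    (ζ : ℝ) (hζpos : 0 < ζ)
    (hζ : IsLeast {r | ∃ v ∈ Set.extremePoints ℝ X, ∃ i,
      ⟪A i, v⟫_ℝ < a i ∧ r = a i - ⟪A i, v⟫_ℝ} ζ)
    (U : Finset (EuclideanSpace ℝ (Fin n))) (hUne : U.Nonempty)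
    (hU : ↑U ⊆ Set.extremePoints ℝ X)
    (ybar : EuclideanSpace ℝ (Fin n))
    (hybar : ybar = ((U.card : ℝ))⁻¹ • ∑ v ∈ U, v) :
    (∀ i, (∀ v ∈ U, ⟪A i, v⟫_ℝ = a i) → a i - ⟪A i, ybar⟫_ℝ = 0) ∧
      (∀ i, ¬(∀ v ∈ U, ⟪A i, v⟫_ℝ = a i) →
        ζ / (U.card : ℝ) ≤ a i - ⟪A i, ybar⟫_ℝ) := by
  subst hybar
  have hcard : (0:ℝ) < U.card := by exact_mod_cast Finset.card_pos.mpr hUne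
  have hinner : ∀ i, ⟪A i, ((U.card:ℝ))⁻¹ • ∑ v ∈ U, v⟫_ℝ
      = ((U.card:ℝ))⁻¹ * ∑ v ∈ U, ⟪A i, v⟫_ℝ := by
    intro i
    rw [real_inner_smul_right, inner_sum]
  have hUX : ∀ v ∈ U, ∀ i, ⟪A i, v⟫_ℝ ≤ a i := by
    intro v hv i
    have : v ∈ X := (hU hv).1
    rw [hX] at this
    exact this i
  constructor
  · intro i hi
    rw [hinner]
    have : ∑ v ∈ U, ⟪A i, v⟫_ℝ = U.card * a i := by
      rw [Finset.sum_congr rfl hi, Finset.sum_const, nsmul_eq_mul]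
    rw [this]
    field_simp
    ring
  · intro i hi
    push_neg at hi
    obtain ⟨v₀, hv₀U, hv₀⟩ := hi
    have hlt : ⟪A i, v₀⟫_ℝ < a i := lt_of_le_of_ne (hUX v₀ hv₀U i) hv₀
    have hζle : ζ ≤ a i - ⟪A i, v₀⟫_ℝ := hζ.2 ⟨v₀, hU hv₀U, i, hlt, rfl⟩
    rw [hinner]
    have heq : a i - (U.card:ℝ)⁻¹ * ∑ v ∈ U, ⟪A i, v⟫_ℝ
        = (U.card:ℝ)⁻¹ * ∑ v ∈ U, (a i - ⟪A i, v⟫_ℝ) := by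
      rw [Finset.sum_sub_distrib, Finset.sum_const, nsmul_eq_mul]
      field_simp
    rw [heq, div_eq_inv_mul]
    have hsum : ζ ≤ ∑ v ∈ U, (a i - ⟪A i, v⟫_ℝ) := by
      refine hζle.trans (Finset.single_le_sum (f := fun v => a i - ⟪A i, v⟫_ℝ)
        (fun v hv => sub_nonneg.mpr (hUX v hv i)) hv₀U)
    exact mul_le_mul_of_nonneg_left hsum (by positivity)
end

section
/- Let X = {x : Ax ≤ a} be a compact polyhedron with vertex set V, f convex and differentiable on ℝⁿ with optimal set X* = argmin_X f, and Ω_X the vertex-facet distance constant of X. Let x ∈ X \ X* with x = Σ_{v∈U} μ_v v, where U ⊆ V and μ_v > 0, Σ μ_v = 1. Then max_{u∈U, p∈V} ⟨∇f(x), u − p⟩ ≥ (Ω_X/|U|) · max_{x*∈X*} ⟨∇f(x), x − x*⟩ / ‖x − x*‖. -/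
open scoped InnerProductSpace

/-- A linear functional on a nonempty compact set attains its minimum at an
extreme point. -/
lemma exists_extremePoint_isMinOn {n : ℕ} (X : Set (EuclideanSpace ℝ (Fin n)))
    (hXc : IsCompact X) (hne : X.Nonempty) (g : EuclideanSpace ℝ (Fin n)) :
    ∃ p ∈ Set.extremePoints ℝ X, ∀ q ∈ X, ⟪g, p⟫_ℝ ≤ ⟪g, q⟫_ℝ := by
  set l : EuclideanSpace ℝ (Fin n) →L[ℝ] ℝ := innerSL ℝ (-g) with hl
  have hBexp : IsExposed ℝ X (l.toExposed X) := ContinuousLinearMap.toExposed.isExposed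
  have hBne : (l.toExposed X).Nonempty := by
    obtain ⟨w, hw, hmax⟩ := hXc.exists_isMaxOn hne l.continuous.continuousOn
    exact ⟨w, hw, fun y hy => hmax hy⟩
  have hBc : IsCompact (l.toExposed X) := hBexp.isCompact hXc
  obtain ⟨p, hp⟩ := hBc.extremePoints_nonempty hBne
  refine ⟨p, hBexp.isExtreme.extremePoints_subset_extremePoints hp, ?_⟩
  obtain ⟨hpX, hmax⟩ := extremePoints_subset hp
  intro q hq
  have := hmax q hq
  simp only [hl, innerSL_apply_apply, inner_neg_left] at this
  linarith

set_option maxHeartbeats 1000000 in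
theorem stmt_11 {n m : ℕ}
    (A : Fin m → EuclideanSpace ℝ (Fin n)) (a : Fin m → ℝ)
    (X : Set (EuclideanSpace ℝ (Fin n)))
    (hX : X = {x | ∀ i, ⟪A i, x⟫_ℝ ≤ a i})
    (hXne : X.Nonempty) (hXc : IsCompact X)
    (V : Set (EuclideanSpace ℝ (Fin n))) (hV : V = Set.extremePoints ℝ X)
    (f : EuclideanSpace ℝ (Fin n) → ℝ)
    (hfconv : ConvexOn ℝ Set.univ f) (hfdiff : Differentiable ℝ f)
    (Xstar : Set (EuclideanSpace ℝ (Fin n)))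
    (hXstar : Xstar = {y ∈ X | ∀ z ∈ X, f y ≤ f z})
    (ζ φ : ℝ)
    (hζ : IsLeast {r | ∃ v ∈ V, ∃ i, ⟪A i, v⟫_ℝ < a i ∧ r = a i - ⟪A i, v⟫_ℝ} ζ)
    (hφ : IsGreatest {r | ∃ i, ¬(∀ v ∈ V, ⟪A i, v⟫_ℝ = a i) ∧ r = ‖A i‖} φ)
    (x : EuclideanSpace ℝ (Fin n)) (hxX : x ∈ X) (hxns : x ∉ Xstar)
    (U : Finset (EuclideanSpace ℝ (Fin n))) (hUne : U.Nonempty) (hUV : ↑U ⊆ V)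
    (μ : EuclideanSpace ℝ (Fin n) → ℝ)
    (hμpos : ∀ v ∈ U, 0 < μ v) (hμ1 : ∑ v ∈ U, μ v = 1)
    (hx : x = ∑ v ∈ U, μ v • v) :
    ∀ xstar ∈ Xstar, ∃ u ∈ U, ∃ p ∈ V,
      ζ / φ / (U.card : ℝ) *
          (⟪gradient f x, x - xstar⟫_ℝ / ‖x - xstar‖) ≤
        ⟪gradient f x, u - p⟫_ℝ := by
  classical
  intro xstar hxstar
  set g : EuclideanSpace ℝ (Fin n) := gradient f x with hg
  -- basic positivity facts
  have hζpos : 0 < ζ := by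
    obtain ⟨v, hvV, i, hvi, hr⟩ := hζ.1
    rw [hr]; linarith
  have hφ0 : 0 ≤ φ := by
    obtain ⟨i, _, hr⟩ := hφ.1
    rw [hr]; positivity
  by_cases hφz : φ = 0
  · obtain ⟨u, hu⟩ := hUne
    refine ⟨u, hu, u, hUV hu, ?_⟩
    simp [hφz]
  have hφpos : 0 < φ := lt_of_le_of_ne hφ0 (Ne.symm hφz)
  have hVX : V ⊆ X := by rw [hV]; exact extremePoints_subset
  have hxstarX : xstar ∈ X := by rw [hXstar] at hxstar; exact hxstar.1
  have hxne : x ≠ xstar := fun h => hxns (h ▸ hxstar)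
  have hznorm : 0 < ‖x - xstar‖ := by
    rw [norm_pos_iff, sub_ne_zero]; exact hxne
  have hNpos : (0 : ℝ) < (U.card : ℝ) := by
    exact_mod_cast Finset.card_pos.mpr hUne
  set N : ℝ := (U.card : ℝ) with hNdef
  set t : ℝ := ζ / (N * φ * ‖x - xstar‖) with htdef
  have htpos : 0 < t :=
    div_pos hζpos (mul_pos (mul_pos hNpos hφpos) hznorm)
  set xbar : EuclideanSpace ℝ (Fin n) := N⁻¹ • ∑ u ∈ U, u with hxbar
  set y : EuclideanSpace ℝ (Fin n) := xbar + t • (xstar - x) with hy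
  -- inner products with xbar
  have hinner_xbar : ∀ w : EuclideanSpace ℝ (Fin n),
      ⟪w, xbar⟫_ℝ = N⁻¹ * ∑ u ∈ U, ⟪w, u⟫_ℝ := by
    intro w
    rw [hxbar, real_inner_smul_right, inner_sum]
  -- key feasibility: y ∈ X
  have hyX : y ∈ X := by
    rw [hX]
    intro i
    have hyi : ⟪A i, y⟫_ℝ = ⟪A i, xbar⟫_ℝ + t * ⟪A i, xstar - x⟫_ℝ := by
      rw [hy, inner_add_right, real_inner_smul_right, real_inner_smul_right]
    by_cases hact : ∀ u ∈ U, ⟪A i, u⟫_ℝ = a i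
    · -- constraint active on all of U
      have hxbari : ⟪A i, xbar⟫_ℝ = a i := by
        rw [hinner_xbar, Finset.sum_congr rfl hact, Finset.sum_const, nsmul_eq_mul,
          ← hNdef, inv_mul_cancel_left₀ (ne_of_gt hNpos)]
      have hxi : ⟪A i, x⟫_ℝ = a i := by
        rw [hx, inner_sum]
        have : ∀ u ∈ U, ⟪A i, μ u • u⟫_ℝ = μ u * a i := by
          intro u hu; rw [real_inner_smul_right, hact u hu]
        rw [Finset.sum_congr rfl this, ← Finset.sum_mul, hμ1, one_mul]
      have hxsi : ⟪A i, xstar⟫_ℝ ≤ a i := by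
        rw [hX] at hxstarX; exact hxstarX i
      have hzi : ⟪A i, xstar - x⟫_ℝ ≤ 0 := by
        rw [inner_sub_right, hxi]; linarith
      have : t * ⟪A i, xstar - x⟫_ℝ ≤ 0 := mul_nonpos_of_nonneg_of_nonpos htpos.le hzi
      rw [hyi, hxbari]; linarith
    · -- constraint inactive at some u0 ∈ U
      push_neg at hact
      obtain ⟨u0, hu0U, hu0i⟩ := hact
      have hu0V : u0 ∈ V := hUV hu0U
      have hu0X : u0 ∈ X := hVX hu0V
      have hu0lt : ⟪A i, u0⟫_ℝ < a i := by
        rw [hX] at hu0X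
        exact lt_of_le_of_ne (hu0X i) hu0i
      have hζle : ζ ≤ a i - ⟪A i, u0⟫_ℝ :=
        hζ.2 ⟨u0, hu0V, i, hu0lt, rfl⟩
      have hAile : ‖A i‖ ≤ φ := by
        refine hφ.2 ⟨i, ?_, rfl⟩
        intro hall
        exact hu0i (hall u0 hu0V)
      -- sum bound
      have hsum : ∑ u ∈ U, ⟪A i, u⟫_ℝ ≤ N * a i - ζ := by
        rw [← Finset.add_sum_erase _ _ hu0U]
        have h1 : ∑ u ∈ U.erase u0, ⟪A i, u⟫_ℝ ≤ (U.erase u0).card • a i := by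
          apply Finset.sum_le_card_nsmul
          intro u hu
          have huX : u ∈ X := hVX (hUV (Finset.mem_of_mem_erase hu))
          rw [hX] at huX; exact huX i
        have hcard : ((U.erase u0).card : ℝ) = N - 1 := by
          rw [Finset.card_erase_of_mem hu0U, hNdef]
          have : 1 ≤ U.card := Finset.card_pos.mpr hUne
          push_cast [Nat.cast_sub this]
          ring
        rw [nsmul_eq_mul] at h1
        rw [hcard] at h1
        nlinarith
      have hxbari : ⟪A i, xbar⟫_ℝ ≤ a i - ζ / N := by
        rw [hinner_xbar]
        calc N⁻¹ * ∑ u ∈ U, ⟪A i, u⟫_ℝ ≤ N⁻¹ * (N * a i - ζ) :=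
              mul_le_mul_of_nonneg_left hsum (by positivity)
          _ = a i - ζ / N := by
              rw [mul_sub, inv_mul_cancel_left₀ (ne_of_gt hNpos), inv_mul_eq_div]
      have hCS : ⟪A i, xstar - x⟫_ℝ ≤ φ * ‖x - xstar‖ := by
        calc ⟪A i, xstar - x⟫_ℝ ≤ ‖A i‖ * ‖xstar - x‖ := real_inner_le_norm _ _
          _ ≤ φ * ‖x - xstar‖ := by
              rw [norm_sub_rev xstar x]
              exact mul_le_mul_of_nonneg_right hAile (norm_nonneg _)
      have hden : N * φ * ‖x - xstar‖ ≠ 0 :=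
        ne_of_gt (mul_pos (mul_pos hNpos hφpos) hznorm)
      have htc : t * (φ * ‖x - xstar‖) = ζ / N := by
        rw [htdef, div_mul_eq_mul_div, div_eq_div_iff hden (ne_of_gt hNpos)]
        ring
      have : t * ⟪A i, xstar - x⟫_ℝ ≤ ζ / N := by
        calc t * ⟪A i, xstar - x⟫_ℝ ≤ t * (φ * ‖x - xstar‖) :=
              mul_le_mul_of_nonneg_left hCS htpos.le
          _ = ζ / N := htc
      rw [hyi]; linarith
  -- the extreme point minimizer p
  obtain ⟨p, hpV, hpmin⟩ := exists_extremePoint_isMinOn X hXc hXne g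
  rw [← hV] at hpV
  have hpy : ⟪g, p⟫_ℝ ≤ ⟪g, y⟫_ℝ := hpmin y hyX
  -- the vertex u with large inner product
  have hsum_eq : ∑ u ∈ U, ⟪g, xbar⟫_ℝ ≤ ∑ u ∈ U, ⟪g, u⟫_ℝ := by
    rw [Finset.sum_const, nsmul_eq_mul, hinner_xbar]
    rw [← hNdef, mul_inv_cancel_left₀ (ne_of_gt hNpos)]
  obtain ⟨u, huU, hule⟩ := Finset.exists_le_of_sum_le hUne hsum_eq
  refine ⟨u, huU, p, hpV, ?_⟩
  have hgy : ⟪g, y⟫_ℝ = ⟪g, xbar⟫_ℝ + t * ⟪g, xstar - x⟫_ℝ := by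
    rw [hy, inner_add_right, real_inner_smul_right, real_inner_smul_right]
  have hsub : ⟪g, xstar - x⟫_ℝ = -⟪g, x - xstar⟫_ℝ := by
    rw [inner_sub_right, inner_sub_right]; ring
  have hfinal : t * ⟪g, x - xstar⟫_ℝ ≤ ⟪g, u - p⟫_ℝ := by
    have hup : ⟪g, u - p⟫_ℝ = ⟪g, u⟫_ℝ - ⟪g, p⟫_ℝ := inner_sub_right _ _ _
    rw [hgy, hsub] at hpy
    rw [hup]
    linarith
  have heq : ζ / φ / N * (⟪g, x - xstar⟫_ℝ / ‖x - xstar‖) = t * ⟪g, x - xstar⟫_ℝ := by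
    rw [htdef, div_div, div_mul_div_comm, div_mul_eq_mul_div,
      div_eq_div_iff (ne_of_gt (mul_pos (mul_pos hφpos hNpos) hznorm))
        (ne_of_gt (mul_pos (mul_pos hNpos hφpos) hznorm))]
    ring
  rw [heq]
  exact hfinal
end

section
/- Let f : ℝⁿ → ℝ be differentiable with ρ-Lipschitz continuous gradient, x ∈ ℝⁿ, d ≠ 0 with ⟨∇f(x), d⟩ < 0, γ̄ > 0, and γ = min(−⟨∇f(x), d⟩/(ρ‖d‖²), γ̄). If γ < γ̄, then f(x + γd) ≤ f(x) − ⟨∇f(x), d⟩²/(2ρ‖d‖²). If γ = γ̄, then f(x + γd) ≤ f(x) + (γ̄/2)·⟨∇f(x), d⟩. -/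
open scoped InnerProductSpace

lemma descent_aux {n : ℕ}
    (f : EuclideanSpace ℝ (Fin n) → ℝ) (hfdiff : Differentiable ℝ f)
    (ρ : ℝ) (hρ : 0 < ρ)
    (hlip : ∀ y z : EuclideanSpace ℝ (Fin n),
      ‖gradient f y - gradient f z‖ ≤ ρ * ‖y - z‖)
    (x d : EuclideanSpace ℝ (Fin n)) (γ : ℝ) (hγ0 : 0 ≤ γ) :
    f (x + γ • d) ≤ f x + γ * ⟪gradient f x, d⟫_ℝ + ρ * γ ^ 2 * ‖d‖ ^ 2 / 2 := by
  set gx := gradient f x with hgx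
  set ψ : ℝ → ℝ := fun t => f (x + t • d) - ⟪gx, d⟫_ℝ * t - (ρ * ‖d‖ ^ 2 / 2) * t ^ 2 with hψ
  have hψd : ∀ t : ℝ, HasDerivAt ψ
      (⟪gradient f (x + t • d), d⟫_ℝ - ⟪gx, d⟫_ℝ - ρ * ‖d‖ ^ 2 * t) t := by
    intro t
    have hline : HasDerivAt (fun t : ℝ => x + t • d) d t := by
      simpa using ((hasDerivAt_id t).smul_const d).const_add x
    have hf' := (hfdiff (x + t • d)).hasGradientAt.hasFDerivAt
    have hcomp := hf'.comp_hasDerivAt t hline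
    have h1 : HasDerivAt (fun t : ℝ => f (x + t • d)) ⟪gradient f (x + t • d), d⟫_ℝ t := by
      exact ((hfdiff (x + t • d)).hasFDerivAt.comp_hasDerivAt t hline).congr_deriv
        (by rw [hf'.fderiv]; simp [InnerProductSpace.toDual_apply_apply])
    have h2 : HasDerivAt (fun t : ℝ => ⟪gx, d⟫_ℝ * t) ⟪gx, d⟫_ℝ t := by
      simpa using (hasDerivAt_id t).const_mul ⟪gx, d⟫_ℝ
    have h3 : HasDerivAt (fun t : ℝ => (ρ * ‖d‖ ^ 2 / 2) * t ^ 2)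
        ((ρ * ‖d‖ ^ 2 / 2) * (2 * t)) t := by
      simpa using (hasDerivAt_pow 2 t).const_mul (ρ * ‖d‖ ^ 2 / 2)
    have := (h1.sub h2).sub h3
    convert this using 1
    · rfl
    · rfl
    · rfl
    · ring
  have hmono : AntitoneOn ψ (Set.Icc 0 γ) := by
    apply antitoneOn_of_deriv_nonpos (convex_Icc 0 γ)
    · exact (Differentiable.continuous (fun t => (hψd t).differentiableAt)).continuousOn
    · intro t ht
      exact (hψd t).differentiableAt.differentiableWithinAt
    · intro t ht
      rw [interior_Icc] at ht
      rw [(hψd t).deriv]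
      have ht0 : 0 ≤ t := ht.1.le
      have hb : ⟪gradient f (x + t • d) - gx, d⟫_ℝ ≤ ρ * ‖d‖ ^ 2 * t := by
        calc ⟪gradient f (x + t • d) - gx, d⟫_ℝ
            ≤ ‖gradient f (x + t • d) - gx‖ * ‖d‖ := real_inner_le_norm _ _
          _ ≤ (ρ * ‖x + t • d - x‖) * ‖d‖ := by
              gcongr; exact hlip _ _
          _ = ρ * ‖d‖ ^ 2 * t := by
              simp [norm_smul, abs_of_nonneg ht0]; ring
      have : ⟪gradient f (x + t • d), d⟫_ℝ - ⟪gx, d⟫_ℝ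
          = ⟪gradient f (x + t • d) - gx, d⟫_ℝ := by
        rw [inner_sub_left]
      linarith [hb, this ▸ hb]
  have h0 : ψ γ ≤ ψ 0 := hmono (Set.left_mem_Icc.2 hγ0) (Set.right_mem_Icc.2 hγ0) hγ0
  have e : x + (0:ℝ) • d = x := by simp
  have h0' : f (x + γ • d) - ⟪gx, d⟫_ℝ * γ - ρ * ‖d‖ ^ 2 / 2 * γ ^ 2
      ≤ f (x + (0:ℝ) • d) - ⟪gx, d⟫_ℝ * 0 - ρ * ‖d‖ ^ 2 / 2 * 0 ^ 2 := h0
  rw [e] at h0'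
  nlinarith [h0']

theorem stmt_14 {n : ℕ}
    (f : EuclideanSpace ℝ (Fin n) → ℝ) (hfdiff : Differentiable ℝ f)
    (ρ : ℝ) (hρ : 0 < ρ)
    (hlip : ∀ y z : EuclideanSpace ℝ (Fin n),
      ‖gradient f y - gradient f z‖ ≤ ρ * ‖y - z‖)
    (x d : EuclideanSpace ℝ (Fin n)) (hd : d ≠ 0)
    (hneg : ⟪gradient f x, d⟫_ℝ < 0)
    (γbar : ℝ) (hγbar : 0 < γbar)
    (γ : ℝ) (hγ : γ = min (-⟪gradient f x, d⟫_ℝ / (ρ * ‖d‖ ^ 2)) γbar) :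
    (γ < γbar →
      f (x + γ • d) ≤ f x - ⟪gradient f x, d⟫_ℝ ^ 2 / (2 * ρ * ‖d‖ ^ 2)) ∧
    (γ = γbar →
      f (x + γ • d) ≤ f x + γbar / 2 * ⟪gradient f x, d⟫_ℝ) := by
  have hdn : 0 < ‖d‖ := norm_pos_iff.2 hd
  have hc : 0 < ρ * ‖d‖ ^ 2 := by positivity
  have hγpos : 0 < γ := by
    rw [hγ]; exact lt_min (div_pos (by linarith) hc) hγbar
  have hdesc := descent_aux f hfdiff ρ hρ hlip x d γ hγpos.le
  obtain ⟨b, hb⟩ : ∃ b, ⟪gradient f x, d⟫_ℝ = b := ⟨_, rfl⟩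
  rw [hb] at hdesc hneg hγ ⊢
  have hb0 : 0 < -b := by linarith
  constructor
  · intro hlt
    have hmin : γ = -b / (ρ * ‖d‖ ^ 2) := by
      rcases min_cases (-b / (ρ * ‖d‖ ^ 2)) γbar with h | h
      · rw [hγ, h.1]
      · exfalso; rw [hγ, h.1] at hlt; exact lt_irrefl _ hlt
    have key : γ * b + ρ * γ ^ 2 * ‖d‖ ^ 2 / 2
        = -(b ^ 2 / (2 * ρ * ‖d‖ ^ 2)) := by
      rw [hmin]
      field_simp
      ring
    linarith [hdesc, key]
  · intro heq
    have hle : γbar ≤ -b / (ρ * ‖d‖ ^ 2) := by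
      by_contra h
      push_neg at h
      rw [hγ, min_eq_left h.le] at heq
      exact absurd (heq ▸ h) (lt_irrefl _)
    have hca : γbar * (ρ * ‖d‖ ^ 2) ≤ -b := (le_div_iff₀ hc).1 hle
    rw [heq] at hdesc
    rw [heq]
    nlinarith [mul_le_mul_of_nonneg_left hca hγbar.le]
end
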